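/- The four integrals of motion of geodesic motion in the Kerr spacetime Poisson-commute with each other: {F_α, F_β} = 0 on 𝒰 for all α, β ∈ {0,1,2,3}; in particular the nontrivial bracket {H, F₃} vanishes identically. -/

import Mathlib

open Real

noncomputable section

/-- Phase space points `z = (t,r,ϑ,φ; p_t,p_r,p_ϑ,p_φ)`, with
`x^μ = z 0, z 1, z 2, z 3` and `p_μ = z 4, z 5, z 6, z 7`. -/
abbrev Phase : Type := Fin 8 → ℝ

/-- Partial derivative of `F` with respect to the `μ`-th coordinate. -/
def pderiv (μ : Fin 8) (F : Phase → ℝ) (z : Phase) : ℝ :=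
  fderiv ℝ F z (Pi.single μ 1)

/-- The canonical Poisson bracket
`{F,G} = Σ_μ (∂F/∂p_μ ∂G/∂x^μ − ∂F/∂x^μ ∂G/∂p_μ)`. -/
def PB (F G : Phase → ℝ) (z : Phase) : ℝ :=
  (pderiv 4 F z * pderiv 0 G z - pderiv 0 F z * pderiv 4 G z) +
  (pderiv 5 F z * pderiv 1 G z - pderiv 1 F z * pderiv 5 G z) +
  (pderiv 6 F z * pderiv 2 G z - pderiv 2 F z * pderiv 6 G z) +
  (pderiv 7 F z * pderiv 3 G z - pderiv 3 F z * pderiv 7 G z)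

/-- The free-particle Hamiltonian of the Kerr metric in horizon-penetrating
coordinates. -/
def KerrH (MH aH : ℝ) (z : Phase) : ℝ :=
  (1 / (2 * ((z 1) ^ 2 + aH ^ 2 * Real.cos (z 2) ^ 2))) *
    (-(((z 1) ^ 2 + aH ^ 2 * Real.cos (z 2) ^ 2) + 2 * MH * z 1) * (z 4) ^ 2
      + 4 * MH * z 1 * z 4 * z 5 + 2 * aH * z 5 * z 7
      + ((z 1) ^ 2 - 2 * MH * z 1 + aH ^ 2) * (z 5) ^ 2
      + (z 6) ^ 2 + (z 7) ^ 2 / Real.sin (z 2) ^ 2)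

/-- The four integrals of motion `F₀ = −H`, `F₁ = −p_t`, `F₂ = p_φ` and
`F₃` (the Carter constant). -/
def KerrF (MH aH : ℝ) : Fin 4 → Phase → ℝ :=
  ![fun z => -KerrH MH aH z,
    fun z => -(z 4),
    fun z => z 7,
    fun z => (z 6) ^ 2 + (z 7 / Real.sin (z 2) + aH * Real.sin (z 2) * z 4) ^ 2
      - 2 * aH ^ 2 * Real.cos (z 2) ^ 2 * KerrH MH aH z]

section Aux

open ContinuousLinearMap

set_option maxHeartbeats 1000000

lemma HasFDerivAt.pow2 {f : Phase → ℝ} {f' : Phase →L[ℝ] ℝ} {z : Phase}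
    (hf : HasFDerivAt f f' z) :
    HasFDerivAt (fun z => f z ^ 2) ((2 * f z) • f') z := by
  have h := hf.mul hf
  rw [show (fun z => f z ^ 2) = fun z => f z * f z from funext fun z => pow_two (f z),
    two_mul, add_smul]
  exact h

lemma HasFDerivAt.div' {f g : Phase → ℝ} {f' g' : Phase →L[ℝ] ℝ} {z : Phase}
    (hf : HasFDerivAt f f' z) (hg : HasFDerivAt g g' z) (hz : g z ≠ 0) :
    HasFDerivAt (fun z => f z / g z) (f z • (-((g z) ^ 2)⁻¹ • g') + (g z)⁻¹ • f') z := by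
  rw [show (fun z => f z / g z) = fun z => f z * (g z)⁻¹ from funext fun z => div_eq_mul_inv _ _]
  exact hf.mul ((hasDerivAt_inv hz).comp_hasFDerivAt z hg)

lemma KerrH_fderiv (MH aH : ℝ) (z : Phase) (hs : Real.sin (z 2) ≠ 0)
    (hρ : (z 1) ^ 2 + aH ^ 2 * Real.cos (z 2) ^ 2 ≠ 0) :
    ∃ D : Phase →L[ℝ] ℝ, HasFDerivAt (KerrH MH aH) D z ∧
      D (Pi.single 0 1) = 0 ∧ D (Pi.single 3 1) = 0 ∧
      D (Pi.single 1 1) =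
        1 / (2 * ((z 1) ^ 2 + aH ^ 2 * Real.cos (z 2) ^ 2)) *
          (-(2 * z 1 + 2 * MH) * (z 4) ^ 2 + 4 * MH * z 4 * z 5 + (2 * z 1 - 2 * MH) * (z 5) ^ 2)
        - z 1 / ((z 1) ^ 2 + aH ^ 2 * Real.cos (z 2) ^ 2) ^ 2 *
          (-(((z 1) ^ 2 + aH ^ 2 * Real.cos (z 2) ^ 2) + 2 * MH * z 1) * (z 4) ^ 2
            + 4 * MH * z 1 * z 4 * z 5 + 2 * aH * z 5 * z 7
            + ((z 1) ^ 2 - 2 * MH * z 1 + aH ^ 2) * (z 5) ^ 2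
            + (z 6) ^ 2 + (z 7) ^ 2 / Real.sin (z 2) ^ 2) ∧
      D (Pi.single 2 1) =
        aH ^ 2 * Real.cos (z 2) * Real.sin (z 2) / ((z 1) ^ 2 + aH ^ 2 * Real.cos (z 2) ^ 2) ^ 2 *
          (-(((z 1) ^ 2 + aH ^ 2 * Real.cos (z 2) ^ 2) + 2 * MH * z 1) * (z 4) ^ 2
            + 4 * MH * z 1 * z 4 * z 5 + 2 * aH * z 5 * z 7
            + ((z 1) ^ 2 - 2 * MH * z 1 + aH ^ 2) * (z 5) ^ 2
            + (z 6) ^ 2 + (z 7) ^ 2 / Real.sin (z 2) ^ 2)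
        + 1 / (2 * ((z 1) ^ 2 + aH ^ 2 * Real.cos (z 2) ^ 2)) *
          (2 * aH ^ 2 * Real.cos (z 2) * Real.sin (z 2) * (z 4) ^ 2
            - 2 * Real.cos (z 2) * (z 7) ^ 2 / Real.sin (z 2) ^ 3) ∧
      D (Pi.single 5 1) =
        1 / (2 * ((z 1) ^ 2 + aH ^ 2 * Real.cos (z 2) ^ 2)) *
          (4 * MH * z 1 * z 4 + 2 * aH * z 7 + 2 * ((z 1) ^ 2 - 2 * MH * z 1 + aH ^ 2) * z 5) ∧
      D (Pi.single 6 1) = z 6 / ((z 1) ^ 2 + aH ^ 2 * Real.cos (z 2) ^ 2) := by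
  have h1 : HasFDerivAt (fun z : Phase => z 1) (proj 1 : Phase →L[ℝ] ℝ) z := hasFDerivAt_apply (𝕜 := ℝ) 1 z
  have h2 : HasFDerivAt (fun z : Phase => z 2) (proj 2 : Phase →L[ℝ] ℝ) z := hasFDerivAt_apply (𝕜 := ℝ) 2 z
  have h4 : HasFDerivAt (fun z : Phase => z 4) (proj 4 : Phase →L[ℝ] ℝ) z := hasFDerivAt_apply (𝕜 := ℝ) 4 z
  have h5 : HasFDerivAt (fun z : Phase => z 5) (proj 5 : Phase →L[ℝ] ℝ) z := hasFDerivAt_apply (𝕜 := ℝ) 5 z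
  have h6 : HasFDerivAt (fun z : Phase => z 6) (proj 6 : Phase →L[ℝ] ℝ) z := hasFDerivAt_apply (𝕜 := ℝ) 6 z
  have h7 : HasFDerivAt (fun z : Phase => z 7) (proj 7 : Phase →L[ℝ] ℝ) z := hasFDerivAt_apply (𝕜 := ℝ) 7 z
  have hcos : HasFDerivAt (fun z : Phase => Real.cos (z 2)) ((-Real.sin (z 2)) • (proj 2 : Phase →L[ℝ] ℝ)) z :=
    HasDerivAt.comp_hasFDerivAt (h₂ := Real.cos) z (Real.hasDerivAt_cos (z 2)) h2
  have hsin : HasFDerivAt (fun z : Phase => Real.sin (z 2)) (Real.cos (z 2) • (proj 2 : Phase →L[ℝ] ℝ)) z :=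
    HasDerivAt.comp_hasFDerivAt (h₂ := Real.sin) z (Real.hasDerivAt_sin (z 2)) h2
  have hρ2 := (h1.pow2).add ((hcos.pow2).const_mul (aH ^ 2))
  have h2ρ2 := hρ2.const_mul (2 : ℝ)
  have h2ρ2' : (2 : ℝ) * ((z 1) ^ 2 + aH ^ 2 * Real.cos (z 2) ^ 2) ≠ 0 := by
    simpa using hρ
  have hA :=
    ((((((hρ2.add (h1.const_mul (2 * MH))).neg.mul (h4.pow2)).add
      (((h1.const_mul (4 * MH)).mul h4).mul h5)).add
      ((h5.const_mul (2 * aH)).mul h7)).add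
      ((((h1.pow2).sub (h1.const_mul (2 * MH))).add_const (aH ^ 2)).mul (h5.pow2))).add
      (h6.pow2)).add ((h7.pow2).div' (hsin.pow2) (pow_ne_zero 2 hs))
  have hInv := (hasFDerivAt_const (1 : ℝ) z).div' h2ρ2 h2ρ2'
  have hH := hInv.mul hA
  refine ⟨_, hH, ?_, ?_, ?_, ?_, ?_, ?_⟩ <;>
    simp only [ContinuousLinearMap.add_apply, ContinuousLinearMap.sub_apply,
      ContinuousLinearMap.smul_apply, ContinuousLinearMap.neg_apply,
      ContinuousLinearMap.zero_apply, ContinuousLinearMap.coe_smul',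
      Pi.smul_apply, proj_apply, smul_eq_mul, Pi.single_apply, Fin.reduceEq, reduceIte,
      mul_zero, zero_mul, mul_one, one_mul, add_zero, zero_add, neg_zero, mul_ite,
      Pi.add_apply, Pi.sub_apply, Pi.mul_apply, Pi.neg_apply]
  · norm_num
  · norm_num
  · field_simp; ring
  · field_simp; ring
  · field_simp; ring
  · field_simp; ring

lemma KerrF3_fderiv (MH aH : ℝ) (z : Phase) (hs : Real.sin (z 2) ≠ 0)
    (D : Phase →L[ℝ] ℝ) (hD : HasFDerivAt (KerrH MH aH) D z) :
    ∃ E : Phase →L[ℝ] ℝ, HasFDerivAt (KerrF MH aH 3) E z ∧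
      E (Pi.single 0 1) = -(2 * aH ^ 2 * Real.cos (z 2) ^ 2) * D (Pi.single 0 1) ∧
      E (Pi.single 3 1) = -(2 * aH ^ 2 * Real.cos (z 2) ^ 2) * D (Pi.single 3 1) ∧
      E (Pi.single 1 1) = -(2 * aH ^ 2 * Real.cos (z 2) ^ 2) * D (Pi.single 1 1) ∧
      E (Pi.single 5 1) = -(2 * aH ^ 2 * Real.cos (z 2) ^ 2) * D (Pi.single 5 1) ∧
      E (Pi.single 6 1) = 2 * z 6 - 2 * aH ^ 2 * Real.cos (z 2) ^ 2 * D (Pi.single 6 1) ∧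
      E (Pi.single 2 1) = 2 * (z 7 / Real.sin (z 2) + aH * Real.sin (z 2) * z 4) *
          (aH * Real.cos (z 2) * z 4 - z 7 * Real.cos (z 2) / Real.sin (z 2) ^ 2)
        + 4 * aH ^ 2 * Real.cos (z 2) * Real.sin (z 2) * KerrH MH aH z
        - 2 * aH ^ 2 * Real.cos (z 2) ^ 2 * D (Pi.single 2 1) := by
  have h2 : HasFDerivAt (fun z : Phase => z 2) (proj 2 : Phase →L[ℝ] ℝ) z := hasFDerivAt_apply (𝕜 := ℝ) 2 z
  have h4 : HasFDerivAt (fun z : Phase => z 4) (proj 4 : Phase →L[ℝ] ℝ) z := hasFDerivAt_apply (𝕜 := ℝ) 4 z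
  have h6 : HasFDerivAt (fun z : Phase => z 6) (proj 6 : Phase →L[ℝ] ℝ) z := hasFDerivAt_apply (𝕜 := ℝ) 6 z
  have h7 : HasFDerivAt (fun z : Phase => z 7) (proj 7 : Phase →L[ℝ] ℝ) z := hasFDerivAt_apply (𝕜 := ℝ) 7 z
  have hcos : HasFDerivAt (fun z : Phase => Real.cos (z 2)) ((-Real.sin (z 2)) • (proj 2 : Phase →L[ℝ] ℝ)) z :=
    HasDerivAt.comp_hasFDerivAt (h₂ := Real.cos) z (Real.hasDerivAt_cos (z 2)) h2
  have hsin : HasFDerivAt (fun z : Phase => Real.sin (z 2)) (Real.cos (z 2) • (proj 2 : Phase →L[ℝ] ℝ)) z :=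
    HasDerivAt.comp_hasFDerivAt (h₂ := Real.sin) z (Real.hasDerivAt_sin (z 2)) h2
  have hw := (h7.div' hsin hs).add ((hsin.const_mul aH).mul h4)
  have hE := ((h6.pow2).add (hw.pow2)).sub (((hcos.pow2).const_mul (2 * aH ^ 2)).mul hD)
  rw [show KerrF MH aH 3 = fun z => (z 6) ^ 2 + (z 7 / Real.sin (z 2) + aH * Real.sin (z 2) * z 4) ^ 2
      - 2 * aH ^ 2 * Real.cos (z 2) ^ 2 * KerrH MH aH z from rfl]
  refine ⟨_, hE, ?_, ?_, ?_, ?_, ?_, ?_⟩ <;>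
    simp only [ContinuousLinearMap.add_apply, ContinuousLinearMap.sub_apply,
      ContinuousLinearMap.smul_apply, ContinuousLinearMap.neg_apply,
      ContinuousLinearMap.zero_apply, ContinuousLinearMap.coe_smul',
      Pi.smul_apply, proj_apply, smul_eq_mul, Pi.single_apply, Fin.reduceEq, reduceIte,
      mul_zero, zero_mul, mul_one, one_mul, add_zero, zero_add, neg_zero, mul_ite,
      Pi.add_apply, Pi.sub_apply, Pi.mul_apply, Pi.neg_apply]
  all_goals try ring
  all_goals (field_simp; ring)

lemma main_bracket (MH aH : ℝ) (z : Phase) (hr : 0 < z 1) (hθ1 : 0 < z 2) (hθ2 : z 2 < Real.pi) :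
    PB (KerrH MH aH) (KerrF MH aH 3) z = 0 ∧
    pderiv 0 (KerrH MH aH) z = 0 ∧ pderiv 3 (KerrH MH aH) z = 0 ∧
    pderiv 0 (KerrF MH aH 3) z = 0 ∧ pderiv 3 (KerrF MH aH 3) z = 0 := by
  have hs : Real.sin (z 2) ≠ 0 := ne_of_gt (Real.sin_pos_of_pos_of_lt_pi hθ1 hθ2)
  have hρ : (z 1) ^ 2 + aH ^ 2 * Real.cos (z 2) ^ 2 ≠ 0 := by positivity
  obtain ⟨D, hD, d0, d3, d1, d2, d5, d6⟩ := KerrH_fderiv MH aH z hs hρ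
  obtain ⟨E, hE, e0, e3, e1, e5, e6, e2⟩ := KerrF3_fderiv MH aH z hs D hD
  have pdH : ∀ μ : Fin 8, pderiv μ (KerrH MH aH) z = D (Pi.single μ 1) := fun μ => by
    simp only [pderiv, hD.fderiv]
  have pdF : ∀ μ : Fin 8, pderiv μ (KerrF MH aH 3) z = E (Pi.single μ 1) := fun μ => by
    simp only [pderiv, hE.fderiv]
  refine ⟨?_, by rw [pdH 0, d0], by rw [pdH 3, d3], by rw [pdF 0, e0, d0]; ring,
    by rw [pdF 3, e3, d3]; ring⟩
  simp only [PB, pdH, pdF, e0, e1, e2, e3, e5, e6, d0, d1, d2, d3, d5, d6, KerrH]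
  field_simp
  ring

end Aux

/-- The four integrals of motion of geodesic motion in the Kerr spacetime
Poisson-commute with each other on `𝒰 = {r > 0, 0 < ϑ < π}`; in particular
the nontrivial bracket `{H, F₃}` vanishes identically. -/
theorem KerrF_poisson_commute (MH aH : ℝ) (hMH : 0 < MH) :
    (∀ z : Phase, 0 < z 1 → 0 < z 2 → z 2 < Real.pi →
      ∀ a b : Fin 4, PB (KerrF MH aH a) (KerrF MH aH b) z = 0) ∧
    (∀ z : Phase, 0 < z 1 → 0 < z 2 → z 2 < Real.pi →
      PB (KerrH MH aH) (KerrF MH aH 3) z = 0) := by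
  constructor
  · intro z h1 h2 h3 a b
    obtain ⟨hPB, hH0, hH3, hF30, hF33⟩ := main_bracket MH aH z h1 h2 h3
    have hF0 : ∀ μ : Fin 8, pderiv μ (KerrF MH aH 0) z = -pderiv μ (KerrH MH aH) z := by
      intro μ
      rw [show KerrF MH aH 0 = fun z => -KerrH MH aH z from rfl]
      simp only [pderiv, fderiv_fun_neg, ContinuousLinearMap.neg_apply]
    have hF1 : ∀ μ : Fin 8, pderiv μ (KerrF MH aH 1) z = -((Pi.single μ 1 : Phase) 4) := by
      intro μ
      rw [show KerrF MH aH 1 = fun z : Phase => -(z 4) from rfl]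
      simp only [pderiv, ((hasFDerivAt_apply (𝕜 := ℝ) 4 z).fun_neg).fderiv,
        ContinuousLinearMap.neg_apply, ContinuousLinearMap.proj_apply]
    have hF2 : ∀ μ : Fin 8, pderiv μ (KerrF MH aH 2) z = (Pi.single μ 1 : Phase) 7 := by
      intro μ
      rw [show KerrF MH aH 2 = fun z : Phase => z 7 from rfl]
      simp only [pderiv, (hasFDerivAt_apply (𝕜 := ℝ) 7 z).fderiv,
        ContinuousLinearMap.proj_apply]
    simp only [PB] at hPB
    simp only [hH0, hH3, hF30, hF33, mul_zero, zero_mul, sub_zero, add_zero, zero_add,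
      zero_sub, neg_zero] at hPB
    fin_cases a <;> fin_cases b <;>
      simp only [Fin.zero_eta, Fin.mk_one, Fin.isValue, Fin.reduceFinMk, PB, hF0, hF1, hF2,
        hH0, hH3, hF30, hF33, Pi.single_apply, Fin.reduceEq, reduceIte, neg_zero, mul_zero,
        zero_mul, mul_one, one_mul, add_zero, zero_add, sub_zero, zero_sub, neg_neg, mul_neg,
        neg_mul] <;>
      try ring
    · linear_combination -hPB
    · linear_combination hPB
  · intro z h1 h2 h3
    exact (main_bracket MH aH z h1 h2 h3).1

end
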